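/- arXiv:2304.11872 — 2 statements merged into one kernel-verified Lean document; each statement's English description precedes it below -/
import Mathlib

section
/- For every temperature 0 < τ ≤ 1 and every margin m > 0, the derivative of the binary self-training loss is strictly negative: ℓ_τ'(m) < 0, where ℓ_τ(m) = −σ(m/τ)·log σ(m) − (1 − σ(m/τ))·log(1 − σ(m)). Consequently, a gradient-descent step on ℓ_τ from any positive margin strictly increases the margin. -/
open Real

/-- The logistic sigmoid `σ t = 1 / (1 + exp (−t))`. -/
noncomputable def sigmoid (t : ℝ) : ℝ := 1 / (1 + Real.exp (-t))

/-- The binary self-training loss at margin `m` with temperature `τ`: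
`ℓ_τ(m) = −σ(m/τ)·log σ(m) − (1 − σ(m/τ))·log (1 − σ(m))`. -/
noncomputable def selfTrainLoss (τ m : ℝ) : ℝ :=
  -_root_.sigmoid (m / τ) * Real.log (_root_.sigmoid m)
    - (1 - _root_.sigmoid (m / τ)) * Real.log (1 - _root_.sigmoid m)

lemma one_add_exp_pos (t : ℝ) : 0 < 1 + Real.exp (-t) := by positivity

lemma sigmoid_pos (t : ℝ) : 0 < _root_.sigmoid t := by
  unfold _root_.sigmoid; positivity

lemma sigmoid_lt_one (t : ℝ) : _root_.sigmoid t < 1 := by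
  unfold _root_.sigmoid
  rw [div_lt_one (one_add_exp_pos t)]
  linarith [Real.exp_pos (-t)]

lemma sigmoid_mono {a b : ℝ} (h : a ≤ b) : _root_.sigmoid a ≤ _root_.sigmoid b := by
  unfold _root_.sigmoid
  apply div_le_div_of_nonneg_left one_pos.le (one_add_exp_pos b)
  have := Real.exp_le_exp.2 (neg_le_neg h)
  linarith

lemma hasDerivAt_sigmoid (t : ℝ) :
    HasDerivAt _root_.sigmoid (_root_.sigmoid t * (1 - _root_.sigmoid t)) t := by
  have h1 : HasDerivAt (fun t : ℝ => 1 + Real.exp (-t)) (-Real.exp (-t)) t := by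
    simpa using (HasDerivAt.exp (hasDerivAt_neg t)).const_add 1
  have h2 := h1.inv (ne_of_gt (one_add_exp_pos t))
  have heq : _root_.sigmoid = fun t : ℝ => (1 + Real.exp (-t))⁻¹ := by
    funext t; simp [_root_.sigmoid, one_div]
  rw [heq]
  refine h2.congr_deriv ?_
  have hp := one_add_exp_pos t
  field_simp [_root_.sigmoid]
  ring

lemma half_lt_sigmoid {t : ℝ} (ht : 0 < t) : (1 : ℝ) / 2 < _root_.sigmoid t := by
  unfold _root_.sigmoid
  rw [div_lt_div_iff₀ two_pos (one_add_exp_pos t)]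
  have : Real.exp (-t) < 1 := Real.exp_lt_one_iff.2 (by linarith)
  linarith

/-- For `0 < τ ≤ 1` and margin `m > 0`, the derivative of the binary self-training loss is
strictly negative; consequently a gradient-descent step `m − η·ℓ_τ'(m)` with step size `η > 0`
strictly increases the margin. -/
theorem stmt8 (τ : ℝ) (hτ0 : 0 < τ) (hτ1 : τ ≤ 1) (m : ℝ) (hm : 0 < m) :
    deriv (selfTrainLoss τ) m < 0 ∧
      ∀ η : ℝ, 0 < η → m < m - η * deriv (selfTrainLoss τ) m := by
  set p := _root_.sigmoid (m / τ) with hp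
  set q := _root_.sigmoid m with hq
  have hq0 : 0 < q := sigmoid_pos m
  have hq1 : q < 1 := sigmoid_lt_one m
  have hp0 : 0 < p := sigmoid_pos _
  have hp1 : p < 1 := sigmoid_lt_one _
  -- derivative of m ↦ sigmoid (m / τ)
  have hdp : HasDerivAt (fun x : ℝ => _root_.sigmoid (x / τ)) (p * (1 - p) * (1 / τ)) m := by
    have := (_root_.hasDerivAt_sigmoid (m / τ)).comp m ((hasDerivAt_id m).div_const τ)
    exact this
  have hdq : HasDerivAt _root_.sigmoid (q * (1 - q)) m := _root_.hasDerivAt_sigmoid m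
  have hlog1 : HasDerivAt (fun x => Real.log (_root_.sigmoid x)) (q * (1 - q) / q) m :=
    hdq.log (ne_of_gt hq0)
  have hlog2 : HasDerivAt (fun x => Real.log (1 - _root_.sigmoid x)) (-(q * (1 - q)) / (1 - q)) m := by
    have h1 : HasDerivAt (fun x => 1 - _root_.sigmoid x) (-(q * (1 - q))) m := by
      exact hdq.const_sub 1
    exact h1.log (by linarith)
  have hD : HasDerivAt (selfTrainLoss τ)
      ((-(p * (1 - p) * (1 / τ))) * Real.log q + (-p) * (q * (1 - q) / q)
        - ((-(p * (1 - p) * (1 / τ))) * Real.log (1 - q)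
            + (1 - p) * (-(q * (1 - q)) / (1 - q)))) m := by
    have h1 : HasDerivAt (fun x : ℝ => -_root_.sigmoid (x / τ)) (-(p * (1 - p) * (1 / τ))) m :=
      hdp.neg
    have h2 : HasDerivAt (fun x : ℝ => 1 - _root_.sigmoid (x / τ)) (-(p * (1 - p) * (1 / τ))) m := by
      exact hdp.const_sub 1
    exact (h1.mul hlog1).sub (h2.mul hlog2)
  have hderiv : deriv (selfTrainLoss τ) m
      = p * (1 - p) * (1 / τ) * (Real.log (1 - q) - Real.log q) + (q - p) := by
    rw [hD.deriv]
    have hq0' : q ≠ 0 := ne_of_gt hq0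
    have hq1' : (1 : ℝ) - q ≠ 0 := by linarith
    field_simp
    ring
  have hneg : deriv (selfTrainLoss τ) m < 0 := by
    rw [hderiv]
    have hqhalf : (1 : ℝ) / 2 < q := half_lt_sigmoid hm
    have hlogneg : Real.log (1 - q) - Real.log q < 0 := by
      have : Real.log (1 - q) < Real.log q :=
        Real.log_lt_log (by linarith) (by linarith)
      linarith
    have hqp : q ≤ p := sigmoid_mono (by
      rw [le_div_iff₀ hτ0]
      nlinarith)
    have hpos : 0 < p * (1 - p) * (1 / τ) := mul_pos (mul_pos hp0 (by linarith)) (by positivity)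
    nlinarith [mul_neg_of_pos_of_neg hpos hlogneg]
  refine ⟨hneg, fun η hη => ?_⟩
  nlinarith [mul_pos hη (neg_pos.2 hneg)]
end

section
/- For every temperature 0 < τ < 1, the binary self-training loss has an exponential tail: ℓ_τ(m) / e^{−m} → 1 as m → ∞, where ℓ_τ(m) = −σ(m/τ)·log σ(m) − (1 − σ(m/τ))·log(1 − σ(m)). -/
open Real Filter Topology

lemma loss_eq (τ m : ℝ) :
    selfTrainLoss τ m = Real.log (1 + Real.exp (-m)) + (1 - _root_.sigmoid (m / τ)) * m := by
  have h1 : (0:ℝ) < 1 + Real.exp (-m) := by positivity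
  have hs : Real.log (_root_.sigmoid m) = -Real.log (1 + Real.exp (-m)) := by
    rw [_root_.sigmoid, one_div, Real.log_inv]
  have h2 : 1 - _root_.sigmoid m = Real.exp (-m) / (1 + Real.exp (-m)) := by
    rw [_root_.sigmoid]; field_simp; ring
  have hs2 : Real.log (1 - _root_.sigmoid m) = -m - Real.log (1 + Real.exp (-m)) := by
    rw [h2, Real.log_div (Real.exp_ne_zero _) h1.ne', Real.log_exp]
  rw [selfTrainLoss, hs, hs2]; ring

/-- For `0 < τ < 1`, the binary self-training loss has an exponential tail:
`ℓ_τ(m) / e^{−m} → 1` as `m → ∞`. -/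
theorem stmt12 (τ : ℝ) (hτ0 : 0 < τ) (hτ1 : τ < 1) :
    Filter.Tendsto (fun m : ℝ => selfTrainLoss τ m / Real.exp (-m))
      Filter.atTop (nhds 1) := by
  -- Part A : log(1+exp(-m))/exp(-m) → 1
  have hd : HasDerivAt (fun x : ℝ => Real.log (1 + x)) 1 0 := by
    have := (Real.hasDerivAt_log (by norm_num : (1:ℝ) + 0 ≠ 0)).comp 0
      ((hasDerivAt_id (0:ℝ)).const_add 1)
    simpa [Function.comp_def] using this
  have hslope : Tendsto (fun x : ℝ => Real.log (1 + x) / x) (𝓝[≠] 0) (𝓝 1) := by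
    have := hasDerivAt_iff_tendsto_slope.mp hd
    refine this.congr' ?_
    filter_upwards [self_mem_nhdsWithin] with x hx
    simp [slope_def_field, div_eq_div_iff]
  have hexp0 : Tendsto (fun m : ℝ => Real.exp (-m)) atTop (𝓝[≠] 0) := by
    rw [tendsto_nhdsWithin_iff]
    refine ⟨Real.tendsto_exp_atBot.comp tendsto_neg_atTop_atBot, ?_⟩
    exact Filter.Eventually.of_forall fun m => (Real.exp_pos _).ne'
  have hA : Tendsto (fun m : ℝ => Real.log (1 + Real.exp (-m)) / Real.exp (-m))
      atTop (𝓝 1) := hslope.comp hexp0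
  -- Part B : (1 - sigmoid(m/τ)) * m * exp m → 0
  set c : ℝ := 1 / τ - 1 with hc
  have hcpos : 0 < c := by
    have h : 1 < 1 / τ := (one_lt_div hτ0).mpr hτ1
    rw [hc]; linarith
  have hB2 : Tendsto (fun m : ℝ => m * Real.exp (-(c * m))) atTop (𝓝 0) := by
    have h1 : Tendsto (fun y : ℝ => y ^ 1 * Real.exp (-y)) atTop (𝓝 0) :=
      Real.tendsto_pow_mul_exp_neg_atTop_nhds_zero 1
    have h2 : Tendsto (fun m : ℝ => c * m) atTop atTop :=
      Filter.tendsto_id.const_mul_atTop hcpos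
    have h3 := (h1.comp h2).const_mul (1 / c)
    simp only [mul_zero] at h3
    refine h3.congr fun m => ?_
    simp only [Function.comp_apply]
    field_simp
  have hsig1 : Tendsto (fun m : ℝ => (1 + Real.exp (-(m / τ)))⁻¹) atTop (𝓝 1) := by
    have hexp : Tendsto (fun m : ℝ => Real.exp (-(m / τ))) atTop (𝓝 0) := by
      refine Real.tendsto_exp_atBot.comp ?_
      exact tendsto_neg_atTop_atBot.comp (tendsto_id.atTop_div_const hτ0)
    have := ((tendsto_const_nhds (x := (1:ℝ))).add hexp).inv₀ (by norm_num)
    simpa using this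
  have hB : Tendsto (fun m : ℝ => (1 - _root_.sigmoid (m / τ)) * m * Real.exp m)
      atTop (𝓝 0) := by
    have key : ∀ m : ℝ, (1 - _root_.sigmoid (m / τ)) * m * Real.exp m
        = (1 + Real.exp (-(m / τ)))⁻¹ * (m * Real.exp (-(c * m))) := by
      intro m
      have h1 : (0:ℝ) < 1 + Real.exp (-(m / τ)) := by positivity
      have h2 : 1 - _root_.sigmoid (m / τ) = Real.exp (-(m / τ)) / (1 + Real.exp (-(m / τ))) := by
        rw [_root_.sigmoid]; field_simp; ring
      rw [h2]
      have h3 : Real.exp (-(m / τ)) * Real.exp m = Real.exp (-(c * m)) := by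
        rw [← Real.exp_add]
        congr 1
        rw [hc]
        field_simp
        ring
      field_simp
      rw [mul_comm m c, ← h3]; ring
    have := hsig1.mul hB2
    simp only [one_mul, mul_zero] at this
    exact this.congr fun m => (key m).symm
  have := hA.add hB
  rw [add_zero] at this
  refine this.congr fun m => ?_
  rw [loss_eq, add_div, div_eq_mul_inv ((1 - _root_.sigmoid (m / τ)) * m), ← Real.exp_neg,
    neg_neg]
end
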